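/- Let r, k and ℓ be positive integers, let G be a hypergraph on n ≥ k vertices all of whose edges are nonempty sets of size at most r, and let ε be a real number with 0 < ε < 1/2. Let B ⊆ V(G) be a subset of size |B| ≤ k and set a = k − |B|. Then the number of sets A ⊆ V(G) such that (A,B) is an ε-pleasant pair is at most 2·r^{1/4}·ε^{-1/2}·k^{-1/4}·n^a/a!. -/

import Mathlib

open scoped Classical

/-- The number of edges of the hypergraph with edge collection `E` that are contained in `A`. -/
noncomputable def hyperEdgesIn {V : Type*} [DecidableEq V] (E : Finset (Finset V))
    (A : Finset V) : ℕ :=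
  (E.filter (fun e => e ⊆ A)).card

/-- The number of vertices of `A` that are non-isolated in `A`, i.e. contained in some edge
`e ⊆ A` of the hypergraph. -/
noncomputable def hyperM {V : Type*} [DecidableEq V] (E : Finset (Finset V))
    (A : Finset V) : ℕ :=
  (A.filter (fun v => ∃ e ∈ E, e ⊆ A ∧ v ∈ e)).card

/-- `h(A,B)`: the number of vertices `v ∈ A \ B` that are connected to `B`, i.e. such that
there is an edge `e` with `v ∈ e` and `e \ {v} ⊆ B`. -/
noncomputable def hyperH {V : Type*} [DecidableEq V] (E : Finset (Finset V))
    (A B : Finset V) : ℕ :=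
  ((A \ B).filter (fun v => ∃ e ∈ E, v ∈ e ∧ e \ {v} ⊆ B)).card

/-- `m(A,B)`: the number of vertices `v ∈ A \ B` that are non-isolated in `A`. -/
noncomputable def hyperMAB {V : Type*} [DecidableEq V] (E : Finset (Finset V))
    (A B : Finset V) : ℕ :=
  ((A \ B).filter (fun v => ∃ e ∈ E, e ⊆ A ∧ v ∈ e)).card

/-- `f(A,B) = m(A,B) - h(A,B)`: the number of vertices `v ∈ A \ B` that are non-isolated
in `A` but not connected to `B`. -/
noncomputable def hyperF {V : Type*} [DecidableEq V] (E : Finset (Finset V))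
    (A B : Finset V) : ℕ :=
  hyperMAB E A B - hyperH E A B

/-- A pair `(A,B)` with `B ⊆ A ⊆ V(G)` is `ε`-pleasant if (i) `|A| = k` and `e(A) = ℓ`,
(ii) `f(A,B) = 0`, (iii) `h(A,B) ≥ (1/4)·r^{-1/2}·ε·√k`, and
(iv) `|A \ B| - h(A,B) ≥ (1/4)·r^{-1/2}·ε·√k`. -/
def Pleasant {V : Type*} [DecidableEq V] (E : Finset (Finset V)) (r k ℓ : ℕ) (ε : ℝ)
    (A B : Finset V) : Prop :=
  B ⊆ A ∧ A.card = k ∧ hyperEdgesIn E A = ℓ ∧ hyperF E A B = 0 ∧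
    (1 / 4 : ℝ) * (Real.sqrt r)⁻¹ * ε * Real.sqrt k ≤ (hyperH E A B : ℝ) ∧
    (1 / 4 : ℝ) * (Real.sqrt r)⁻¹ * ε * Real.sqrt k ≤
      ((A \ B).card : ℝ) - (hyperH E A B : ℝ)

/-- Theorem: let `r`, `k`, `ℓ` be positive integers, `G` a hypergraph on `n ≥ k` vertices all
of whose edges are nonempty sets of size at most `r`, and `ε` a real with `0 < ε < 1/2`.
Let `B ⊆ V(G)` with `|B| ≤ k` and `a = k - |B|`. Then the number of sets `A ⊆ V(G)` such that
`(A,B)` is an `ε`-pleasant pair is at most `2·r^{1/4}·ε^{-1/2}·k^{-1/4}·n^a/a!`. -/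

private lemma stirling_aux (n : ℕ) (hn : 1 ≤ n) :
    0 < Real.sqrt (2 * n : ℝ) * ((n : ℝ) / Real.exp 1) ^ n := by
  have h0 : (0:ℝ) < n := by exact_mod_cast hn
  positivity

private lemma fact_upper (n : ℕ) (hn : 1 ≤ n) :
    (n.factorial : ℝ) ≤ (Real.exp 1 / Real.sqrt 2) *
      (Real.sqrt (2 * n : ℝ) * ((n : ℝ) / Real.exp 1) ^ n) := by
  have h1 : Stirling.stirlingSeq n ≤ Stirling.stirlingSeq 1 := by
    obtain ⟨m, rfl⟩ := Nat.exists_eq_add_of_le hn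
    have := Stirling.stirlingSeq'_antitone (Nat.zero_le m)
    simpa [Function.comp, Nat.add_comm] using this
  rw [Stirling.stirlingSeq_one] at h1
  have h2 := stirling_aux n hn
  have := Stirling.stirlingSeq n
  rw [Stirling.stirlingSeq, div_le_div_iff₀ h2 (by positivity)] at h1
  have hs2 : (0:ℝ) < Real.sqrt 2 := by positivity
  rw [div_mul_eq_mul_div, le_div_iff₀ hs2]
  linarith

private lemma fact_lower (n : ℕ) (hn : 1 ≤ n) :
    Real.sqrt Real.pi * (Real.sqrt (2 * n : ℝ) * ((n : ℝ) / Real.exp 1) ^ n)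
      ≤ (n.factorial : ℝ) := by
  have h1 : Real.sqrt Real.pi ≤ Stirling.stirlingSeq n := by
    obtain ⟨m, rfl⟩ := Nat.exists_eq_add_of_le hn
    have ht : Filter.Tendsto (Stirling.stirlingSeq ∘ Nat.succ) Filter.atTop
        (nhds (Real.sqrt Real.pi)) :=
      Stirling.tendsto_stirlingSeq_sqrt_pi.comp (Filter.tendsto_add_atTop_nat 1)
    have := Stirling.stirlingSeq'_antitone.le_of_tendsto ht m
    simpa [Function.comp, Nat.add_comm] using this
  have h2 := stirling_aux n hn
  rw [Stirling.stirlingSeq, le_div_iff₀ h2] at h1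
  linarith


private lemma amgm2 {x y : ℝ} (hx : 0 ≤ x) (hy : 0 ≤ y) (s t : ℕ) (hs : 1 ≤ s) (ht : 1 ≤ t) :
    x ^ s * y ^ t ≤ (s : ℝ) ^ s * (t : ℝ) ^ t / ((s : ℝ) + t) ^ (s + t) * (x + y) ^ (s + t) := by
  have hS : (0:ℝ) < s := by exact_mod_cast hs
  have hT : (0:ℝ) < t := by exact_mod_cast ht
  have hA : (0:ℝ) < (s:ℝ) + t := by linarith
  set p₁ : ℝ := ((s:ℝ) + t) * x / s with hp₁
  set p₂ : ℝ := ((s:ℝ) + t) * y / t with hp₂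
  have hp₁0 : 0 ≤ p₁ := by positivity
  have hp₂0 : 0 ≤ p₂ := by positivity
  have hgm := Real.geom_mean_le_arith_mean2_weighted
    (w₁ := (s:ℝ)/((s:ℝ)+t)) (w₂ := (t:ℝ)/((s:ℝ)+t)) (p₁ := p₁) (p₂ := p₂)
    (by positivity) (by positivity) hp₁0 hp₂0 (by field_simp)
  have hsum : (s:ℝ)/((s:ℝ)+t) * p₁ + (t:ℝ)/((s:ℝ)+t) * p₂ = x + y := by
    rw [hp₁, hp₂]; field_simp
  rw [hsum] at hgm
  have hpow := pow_le_pow_left₀ (by positivity) hgm (s + t)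
  have hL : (p₁ ^ ((s:ℝ)/((s:ℝ)+t)) * p₂ ^ ((t:ℝ)/((s:ℝ)+t))) ^ (s + t)
      = p₁ ^ s * p₂ ^ t := by
    rw [mul_pow, ← Real.rpow_natCast (p₁ ^ ((s:ℝ)/((s:ℝ)+t))) (s+t),
      ← Real.rpow_natCast (p₂ ^ ((t:ℝ)/((s:ℝ)+t))) (s+t),
      ← Real.rpow_mul hp₁0, ← Real.rpow_mul hp₂0]
    have h1 : (s:ℝ)/((s:ℝ)+t) * ((s:ℕ) + (t:ℕ) : ℕ) = (s:ℕ) := by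
      push_cast; field_simp
    have h2 : (t:ℝ)/((s:ℝ)+t) * ((s:ℕ) + (t:ℕ) : ℕ) = (t:ℕ) := by
      push_cast; field_simp
    rw [h1, h2, Real.rpow_natCast, Real.rpow_natCast]
  rw [hL] at hpow
  have hexp : p₁ ^ s * p₂ ^ t = ((s:ℝ)+t)^(s+t) / ((s:ℝ)^s * (t:ℝ)^t) * (x^s * y^t) := by
    rw [hp₁, hp₂, div_pow, div_pow, mul_pow, mul_pow, pow_add]
    field_simp
  rw [hexp] at hpow
  rw [div_mul_eq_mul_div, div_le_iff₀ (by positivity)] at hpow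
  rw [div_mul_eq_mul_div, mul_comm, le_div_iff₀ (by positivity)]
  nlinarith [hpow]

set_option maxHeartbeats 2000000 in
private lemma key_bound (n' w u s t : ℕ) (hs : 1 ≤ s) (ht : 1 ≤ t)
    (hwu : w + u ≤ n') (c' : ℝ) (hc' : 0 < c') (hcs : c' ≤ s) (hct : c' ≤ t) :
    (w.choose s : ℝ) * (u.choose t : ℝ) ≤
      (Real.sqrt c')⁻¹ * (n' : ℝ) ^ (s + t) / ((s + t).factorial : ℝ) := by
  have hS : (0:ℝ) < s := by exact_mod_cast hs
  have hT : (0:ℝ) < t := by exact_mod_cast ht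
  have hA : (0:ℝ) < (s:ℝ) + t := by linarith
  have ha1 : 1 ≤ s + t := le_trans hs (Nat.le_add_right s t)
  have hcast : ((s + t : ℕ) : ℝ) = (s:ℝ) + t := by push_cast; ring
  -- step 1 : choose bounds
  have h1 : (w.choose s : ℝ) ≤ (w:ℝ)^s / s.factorial := by
    have := Nat.choose_le_pow_div (α := ℝ) s w
    push_cast at this ⊢; exact this
  have h2 : (u.choose t : ℝ) ≤ (u:ℝ)^t / t.factorial := by
    have := Nat.choose_le_pow_div (α := ℝ) t u
    push_cast at this ⊢; exact this
  have hprod : (w.choose s : ℝ) * (u.choose t : ℝ) ≤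
      ((w:ℝ)^s * (u:ℝ)^t) / (s.factorial * t.factorial) := by
    calc (w.choose s : ℝ) * (u.choose t : ℝ) ≤ ((w:ℝ)^s / s.factorial) * ((u:ℝ)^t / t.factorial) :=
          mul_le_mul h1 h2 (by positivity) (by positivity)
      _ = ((w:ℝ)^s * (u:ℝ)^t) / (s.factorial * t.factorial) := by ring
  -- step 2 : AM-GM
  have h3 : ((w:ℝ))^s * (u:ℝ)^t ≤
      (s:ℝ)^s * (t:ℝ)^t / ((s:ℝ)+t)^(s+t) * ((n':ℝ)) ^ (s+t) := by
    refine le_trans (amgm2 (by positivity) (by positivity) s t hs ht) ?_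
    have : ((w:ℝ) + u) ^ (s+t) ≤ (n':ℝ)^(s+t) := by
      apply pow_le_pow_left₀ (by positivity)
      exact_mod_cast hwu
    exact mul_le_mul_of_nonneg_left this (by positivity)
  -- step 3 : the scalar Stirling inequality
  set E1 : ℝ := Real.exp 1 with hE1
  have hE1pos : 0 < E1 := Real.exp_pos 1
  have hpi : Real.sqrt Real.pi * Real.sqrt Real.pi = Real.pi :=
    Real.mul_self_sqrt Real.pi_pos.le
  have h2' : Real.sqrt 2 * Real.sqrt 2 = 2 := Real.mul_self_sqrt (by norm_num)
  have hsqc : (0:ℝ) < Real.sqrt c' := Real.sqrt_pos.2 hc'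
  -- sqrt(c') * sqrt(s+t) ≤ 2 * (sqrt s * sqrt t)
  have h4 : Real.sqrt c' * Real.sqrt ((s:ℝ)+t) ≤ 2 * (Real.sqrt s * Real.sqrt t) := by
    have hst2 : c' * ((s:ℝ)+t) ≤ 2 * ((s:ℝ)*t) := by nlinarith
    calc Real.sqrt c' * Real.sqrt ((s:ℝ)+t) = Real.sqrt (c' * ((s:ℝ)+t)) :=
          (Real.sqrt_mul hc'.le _).symm
      _ ≤ Real.sqrt (2 * ((s:ℝ)*t)) := Real.sqrt_le_sqrt hst2
      _ = Real.sqrt 2 * (Real.sqrt s * Real.sqrt t) := by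
          rw [Real.sqrt_mul (by norm_num), Real.sqrt_mul (by positivity)]
      _ ≤ 2 * (Real.sqrt s * Real.sqrt t) := by
          have h22 : Real.sqrt 2 ≤ 2 := by nlinarith [h2', Real.sqrt_nonneg (2:ℝ)]
          nlinarith [h22, mul_nonneg (Real.sqrt_nonneg (s:ℝ)) (Real.sqrt_nonneg (t:ℝ))]
  have hepi : E1 ≤ Real.pi := by
    nlinarith [Real.exp_one_lt_d9, Real.pi_gt_d6]
  have hscalar : E1 * Real.sqrt ((s:ℝ)+t) ≤
      (Real.sqrt c')⁻¹ * ((Real.sqrt Real.pi * Real.sqrt Real.pi) *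
        ((Real.sqrt 2 * Real.sqrt s) * (Real.sqrt 2 * Real.sqrt t))) := by
    have heq : (Real.sqrt Real.pi * Real.sqrt Real.pi) *
        ((Real.sqrt 2 * Real.sqrt s) * (Real.sqrt 2 * Real.sqrt t)) =
        Real.pi * (2 * (Real.sqrt s * Real.sqrt t)) := by
      rw [hpi, show (Real.sqrt 2 * Real.sqrt (s:ℝ)) * (Real.sqrt 2 * Real.sqrt (t:ℝ))
          = (Real.sqrt 2 * Real.sqrt 2) * (Real.sqrt (s:ℝ) * Real.sqrt (t:ℝ)) from by ring, h2']
    rw [heq]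
    have hAa : 0 ≤ Real.sqrt ((s:ℝ)+t) := Real.sqrt_nonneg _
    have step : (Real.sqrt c')⁻¹ * (Real.pi * (Real.sqrt c' * Real.sqrt ((s:ℝ)+t))) ≤
        (Real.sqrt c')⁻¹ * (Real.pi * (2 * (Real.sqrt s * Real.sqrt t))) := by
      apply mul_le_mul_of_nonneg_left _ (by positivity)
      exact mul_le_mul_of_nonneg_left h4 Real.pi_pos.le
    have hid : (Real.sqrt c')⁻¹ * (Real.pi * (Real.sqrt c' * Real.sqrt ((s:ℝ)+t))) =
        Real.pi * Real.sqrt ((s:ℝ)+t) := by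
      field_simp
    calc E1 * Real.sqrt ((s:ℝ)+t) ≤ Real.pi * Real.sqrt ((s:ℝ)+t) :=
          mul_le_mul_of_nonneg_right hepi hAa
      _ ≤ _ := by rw [← hid]; exact step
  -- step 4 : Stirling comparison
  have hs2ne : Real.sqrt 2 ≠ 0 := by positivity
  have hE1ne : E1 ≠ 0 := hE1pos.ne'
  have hfa := fact_upper (s+t) ha1
  have hfs := fact_lower s hs
  have hft := fact_lower t ht
  rw [hcast] at hfa
  rw [Real.sqrt_mul (by norm_num : (0:ℝ) ≤ 2)] at hfa hfs hft
  have hEa : E1^s * E1^t = E1^(s+t) := (pow_add E1 s t).symm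
  have core2 : (s:ℝ)^s * (t:ℝ)^t * (((s+t).factorial : ℕ) : ℝ) ≤
      (Real.sqrt c')⁻¹ * (((s:ℝ)+t)^(s+t) * ((s.factorial : ℝ) * (t.factorial : ℝ))) := by
    have hmid : ((s:ℝ)^s * (t:ℝ)^t) * ((E1 / Real.sqrt 2) *
        ((Real.sqrt 2 * Real.sqrt ((s:ℝ)+t)) * (((s:ℝ)+t) / E1) ^ (s+t))) ≤
        (Real.sqrt c')⁻¹ * (((s:ℝ)+t)^(s+t) *
          ((Real.sqrt Real.pi * ((Real.sqrt 2 * Real.sqrt s) * ((s:ℝ) / E1) ^ s)) *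
           (Real.sqrt Real.pi * ((Real.sqrt 2 * Real.sqrt t) * ((t:ℝ) / E1) ^ t)))) := by
      rw [div_pow, div_pow, div_pow]
      have hP : (0:ℝ) ≤ (s:ℝ)^s * (t:ℝ)^t * ((s:ℝ)+t)^(s+t) / E1^(s+t) := by positivity
      have hmul := mul_le_mul_of_nonneg_right hscalar hP
      have e1 : ((s:ℝ)^s * (t:ℝ)^t) * ((E1 / Real.sqrt 2) *
          ((Real.sqrt 2 * Real.sqrt ((s:ℝ)+t)) * (((s:ℝ)+t)^(s+t) / E1^(s+t)))) =
          (E1 * Real.sqrt ((s:ℝ)+t)) *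
            ((s:ℝ)^s * (t:ℝ)^t * ((s:ℝ)+t)^(s+t) / E1^(s+t)) := by
        rw [show ((s:ℝ)^s * (t:ℝ)^t) * ((E1 / Real.sqrt 2) *
          ((Real.sqrt 2 * Real.sqrt ((s:ℝ)+t)) * (((s:ℝ)+t)^(s+t) / E1^(s+t)))) =
          ((E1 / Real.sqrt 2) * Real.sqrt 2) * (Real.sqrt ((s:ℝ)+t) *
            ((s:ℝ)^s * (t:ℝ)^t * (((s:ℝ)+t)^(s+t) / E1^(s+t)))) from by ring,
          div_mul_cancel₀ E1 hs2ne]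
        ring
      have e2 : (Real.sqrt c')⁻¹ * (((s:ℝ)+t)^(s+t) *
          ((Real.sqrt Real.pi * ((Real.sqrt 2 * Real.sqrt s) * ((s:ℝ)^s / E1^s))) *
           (Real.sqrt Real.pi * ((Real.sqrt 2 * Real.sqrt t) * ((t:ℝ)^t / E1^t))))) =
          ((Real.sqrt c')⁻¹ * ((Real.sqrt Real.pi * Real.sqrt Real.pi) *
            ((Real.sqrt 2 * Real.sqrt s) * (Real.sqrt 2 * Real.sqrt t)))) *
            ((s:ℝ)^s * (t:ℝ)^t * ((s:ℝ)+t)^(s+t) / E1^(s+t)) := by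
        rw [← hEa]; ring
      rw [e1, e2]; exact hmul
    calc (s:ℝ)^s * (t:ℝ)^t * (((s+t).factorial : ℕ) : ℝ)
        ≤ ((s:ℝ)^s * (t:ℝ)^t) * ((E1 / Real.sqrt 2) *
          ((Real.sqrt 2 * Real.sqrt ((s:ℝ)+t)) * (((s:ℝ)+t) / E1) ^ (s+t))) := by
          exact mul_le_mul_of_nonneg_left hfa (by positivity)
      _ ≤ (Real.sqrt c')⁻¹ * (((s:ℝ)+t)^(s+t) *
          ((Real.sqrt Real.pi * ((Real.sqrt 2 * Real.sqrt s) * ((s:ℝ) / E1) ^ s)) *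
           (Real.sqrt Real.pi * ((Real.sqrt 2 * Real.sqrt t) * ((t:ℝ) / E1) ^ t)))) := hmid
      _ ≤ (Real.sqrt c')⁻¹ * (((s:ℝ)+t)^(s+t) * ((s.factorial : ℝ) * (t.factorial : ℝ))) := by
          apply mul_le_mul_of_nonneg_left _ (by positivity)
          apply mul_le_mul_of_nonneg_left _ (by positivity)
          exact mul_le_mul hfs hft (by positivity) (by positivity)
  -- step 5 : assemble
  have hbr : (s:ℝ)^s * (t:ℝ)^t / (((s:ℝ)+t)^(s+t) * ((s.factorial : ℝ) * (t.factorial : ℝ)))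
      ≤ (Real.sqrt c')⁻¹ / (((s+t).factorial : ℕ) : ℝ) := by
    rw [div_le_div_iff₀ (by positivity) (by positivity)]
    calc (s:ℝ)^s * (t:ℝ)^t * (((s+t).factorial : ℕ) : ℝ)
        ≤ (Real.sqrt c')⁻¹ * (((s:ℝ)+t)^(s+t) * ((s.factorial : ℝ) * (t.factorial : ℝ))) :=
          core2
      _ = (Real.sqrt c')⁻¹ * (((s:ℝ)+t)^(s+t) * ((s.factorial : ℝ) * (t.factorial : ℝ))) := by
          ring
  calc (w.choose s : ℝ) * (u.choose t : ℝ)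
      ≤ ((w:ℝ)^s * (u:ℝ)^t) / ((s.factorial : ℝ) * (t.factorial : ℝ)) := hprod
    _ ≤ ((s:ℝ)^s * (t:ℝ)^t / (((s:ℝ)+t)^(s+t)) * ((n':ℝ)) ^ (s+t)) /
        ((s.factorial : ℝ) * (t.factorial : ℝ)) := by gcongr
    _ = ((s:ℝ)^s * (t:ℝ)^t / (((s:ℝ)+t)^(s+t) * ((s.factorial : ℝ) * (t.factorial : ℝ))))
        * ((n':ℝ)) ^ (s+t) := by ring
    _ ≤ ((Real.sqrt c')⁻¹ / (((s+t).factorial : ℕ) : ℝ)) * ((n':ℝ)) ^ (s+t) :=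
        mul_le_mul_of_nonneg_right hbr (by positivity)
    _ = (Real.sqrt c')⁻¹ * (n' : ℝ) ^ (s + t) / (((s+t).factorial : ℕ) : ℝ) := by ring

theorem stmt_12 (r k ℓ n : ℕ) (hr : 1 ≤ r) (hk : 1 ≤ k) (hℓ : 1 ≤ ℓ) (hn : k ≤ n)
    (E : Finset (Finset (Fin n))) (hE : ∀ e ∈ E, e.Nonempty ∧ e.card ≤ r)
    (ε : ℝ) (hε0 : 0 < ε) (hε1 : ε < 1 / 2)
    (B : Finset (Fin n)) (hB : B.card ≤ k) :
    ({A : Finset (Fin n) | Pleasant E r k ℓ ε A B}.ncard : ℝ) ≤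
      2 * (r : ℝ) ^ ((1 : ℝ) / 4) * ε ^ (-(1 / 2 : ℝ)) * (k : ℝ) ^ (-(1 / 4 : ℝ)) *
        (n : ℝ) ^ (k - B.card) / ((k - B.card).factorial : ℝ) := by
  classical
  set b := B.card with hbdef
  set a := k - b with hadef
  set c' : ℝ := (1 / 4 : ℝ) * (Real.sqrt r)⁻¹ * ε * Real.sqrt k with hc'def
  have hrpos : (0:ℝ) < r := by exact_mod_cast hr
  have hkpos : (0:ℝ) < k := by exact_mod_cast hk
  have hc'pos : 0 < c' := by
    rw [hc'def]; positivity
  -- the coefficient identity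
  have hcoef : (Real.sqrt c')⁻¹ =
      2 * (r : ℝ) ^ ((1 : ℝ) / 4) * ε ^ (-(1 / 2 : ℝ)) * (k : ℝ) ^ (-(1 / 4 : ℝ)) := by
    have hq : ∀ x : ℝ, 0 < x → Real.sqrt (Real.sqrt x) = x ^ ((1:ℝ)/4) := by
      intro x hx
      rw [Real.sqrt_eq_rpow, Real.sqrt_eq_rpow, ← Real.rpow_mul hx.le]
      norm_num
    have hsqk : (0:ℝ) < Real.sqrt k := Real.sqrt_pos.2 hkpos
    have hsqr : (0:ℝ) < Real.sqrt r := Real.sqrt_pos.2 hrpos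
    have expand : Real.sqrt c' =
        (1/2 : ℝ) * (Real.sqrt (Real.sqrt r))⁻¹ * Real.sqrt ε * Real.sqrt (Real.sqrt k) := by
      rw [hc'def, Real.sqrt_mul (by positivity), Real.sqrt_mul (by positivity),
        Real.sqrt_mul (by norm_num : (0:ℝ) ≤ 1/4), Real.sqrt_inv]
      rw [show (1/4:ℝ) = (1/2)^2 by norm_num, Real.sqrt_sq (by norm_num)]
    have hε2 : ε ^ (-(1/2 : ℝ)) = (Real.sqrt ε)⁻¹ := by
      rw [Real.rpow_neg hε0.le, Real.sqrt_eq_rpow]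
    have hk4 : (k:ℝ) ^ (-(1/4 : ℝ)) = (Real.sqrt (Real.sqrt k))⁻¹ := by
      rw [Real.rpow_neg hkpos.le, hq _ hkpos]
    rw [expand, hε2, hk4, hq _ hrpos]
    have h1 : ((r:ℝ) ^ ((1:ℝ)/4)) ≠ 0 := by positivity
    have h2 : Real.sqrt ε ≠ 0 := by positivity
    have h3 : ((k:ℝ) ^ ((1:ℝ)/4)) ≠ 0 := by positivity
    field_simp

  -- the family of pleasant sets
  set 𝒜 : Finset (Finset (Fin n)) := Finset.univ.filter (fun A => Pleasant E r k ℓ ε A B)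
    with h𝒜
  have hset : {A : Finset (Fin n) | Pleasant E r k ℓ ε A B} = (𝒜 : Set (Finset (Fin n))) := by
    ext A; simp [h𝒜]
  rw [hset, Set.ncard_coe_finset]
  -- the set of vertices connected to B
  set W : Finset (Fin n) := (Finset.univ \ B).filter (fun v => ∃ e ∈ E, v ∈ e ∧ e \ {v} ⊆ B)
    with hW
  set w := W.card with hwdef
  set R : Finset (Fin n) := Finset.univ \ (B ∪ W) with hR
  set u := R.card with hudef
  set SA : Finset (Fin n) → Finset (Fin n) :=
    fun A => (A \ B).filter (fun v => ∃ e ∈ E, v ∈ e ∧ e \ {v} ⊆ B) with hSA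
  -- basic facts about pleasant sets
  have hmem𝒜 : ∀ A ∈ 𝒜, Pleasant E r k ℓ ε A B := by
    intro A hA; rw [h𝒜] at hA; exact (Finset.mem_filter.1 hA).2
  have FW : ∀ A, SA A ⊆ W := by
    intro A v hv
    rw [hSA] at hv
    obtain ⟨hv1, hv2⟩ := Finset.mem_filter.1 hv
    rw [hW]
    refine Finset.mem_filter.2 ⟨?_, hv2⟩
    simp only [Finset.mem_sdiff, Finset.mem_univ, true_and]
    exact (Finset.mem_sdiff.1 hv1).2
  have FAB : ∀ A, Pleasant E r k ℓ ε A B → (A \ B).card = a := by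
    intro A hA
    rw [Finset.card_sdiff_of_subset hA.1, hA.2.1]
  have FH : ∀ A, hyperH E A B = (SA A).card := by
    intro A; rw [hSA, hyperH]
  have FM : ∀ A, Pleasant E r k ℓ ε A B →
      (A \ B).filter (fun v => ∃ e ∈ E, e ⊆ A ∧ v ∈ e) = SA A := by
    intro A hA
    refine (Finset.eq_of_subset_of_card_le ?_ ?_).symm
    · intro v hv
      rw [hSA] at hv
      obtain ⟨hv1, e, heE, hve, hes⟩ := Finset.mem_filter.1 hv
      refine Finset.mem_filter.2 ⟨hv1, e, heE, ?_, hve⟩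
      intro x hx
      by_cases hxv : x = v
      · subst hxv; exact (Finset.mem_sdiff.1 hv1).1
      · exact hA.1 (hes (Finset.mem_sdiff.2 ⟨hx, by simp [hxv]⟩))
    · have h0 : hyperF E A B = 0 := hA.2.2.2.1
      rw [hyperF] at h0
      have := Nat.sub_eq_zero_iff_le.1 h0
      rw [hyperMAB, FH A] at this
      exact this
  have FE : ∀ A, Pleasant E r k ℓ ε A B →
      (E.filter (fun e => e ⊆ B ∪ SA A)).card = ℓ := by
    intro A hA
    have : E.filter (fun e => e ⊆ B ∪ SA A) = E.filter (fun e => e ⊆ A) := by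
      apply Finset.filter_congr
      intro e heE
      constructor
      · intro hsub
        refine hsub.trans ?_
        intro x hx
        rcases Finset.mem_union.1 hx with hx | hx
        · exact hA.1 hx
        · rw [hSA] at hx
          exact (Finset.mem_sdiff.1 (Finset.filter_subset _ _ hx)).1
      · intro hsub x hx
        by_cases hxB : x ∈ B
        · exact Finset.mem_union_left _ hxB
        · refine Finset.mem_union_right _ ?_
          rw [← FM A hA]
          exact Finset.mem_filter.2 ⟨Finset.mem_sdiff.2 ⟨hsub hx, hxB⟩, e, heE, hsub, hx⟩
    rw [this]
    exact hA.2.2.1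
  -- move to the subtype of W to apply LYM
  set φ : Finset (Fin n) → Finset {x // x ∈ W} := fun S => S.subtype (fun x => x ∈ W) with hφ
  have hφmap : ∀ S, S ⊆ W → (φ S).map (Function.Embedding.subtype _) = S := by
    intro S hS
    rw [hφ]
    exact Finset.subtype_map_of_mem (fun x hx => hS hx)
  have hφcard : ∀ S, S ⊆ W → (φ S).card = S.card := by
    intro S hS
    conv_rhs => rw [← hφmap S hS]
    rw [Finset.card_map]
  set 𝒮 : Finset (Finset {x // x ∈ W}) := 𝒜.image (fun A => φ (SA A)) with h𝒮
  -- the S-sets form an antichain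
  have hanti : IsAntichain (· ⊆ ·) (𝒮 : Set (Finset {x // x ∈ W})) := by
    rintro S₁ hS₁ S₂ hS₂ hne hsub
    rw [h𝒮, Finset.coe_image] at hS₁ hS₂
    obtain ⟨A₁, hA₁, rfl⟩ := hS₁
    obtain ⟨A₂, hA₂, rfl⟩ := hS₂
    rw [Finset.mem_coe] at hA₁ hA₂
    have hP₁ := hmem𝒜 _ hA₁
    have hP₂ := hmem𝒜 _ hA₂
    have hsub' : SA A₁ ⊆ SA A₂ := by
      have h : (φ (SA A₁)).map (Function.Embedding.subtype (fun x => x ∈ W)) ⊆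
          (φ (SA A₂)).map (Function.Embedding.subtype (fun x => x ∈ W)) :=
        Finset.map_subset_map.2 hsub
      rwa [hφmap _ (FW A₁), hφmap _ (FW A₂)] at h
    have hne' : SA A₁ ≠ SA A₂ := by
      intro h; exact hne (congrArg φ h)
    obtain ⟨v, hv₂, hv₁⟩ := Finset.exists_of_ssubset ⟨hsub', fun h => hne' (le_antisymm hsub' h)⟩
    -- the witness edge for v
    have hv₂' := hv₂
    rw [hSA] at hv₂'
    obtain ⟨hvAB, e, heE, hve, heB⟩ := Finset.mem_filter.1 hv₂'
    have hvB : v ∉ B := (Finset.mem_sdiff.1 hvAB).2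
    have hstrict : E.filter (fun e => e ⊆ B ∪ SA A₁) ⊂ E.filter (fun e => e ⊆ B ∪ SA A₂) := by
      constructor
      · intro e' he'
        obtain ⟨h1, h2⟩ := Finset.mem_filter.1 he'
        exact Finset.mem_filter.2 ⟨h1, h2.trans (Finset.union_subset_union_right hsub')⟩
      · intro hcon
        have he2 : e ∈ E.filter (fun e => e ⊆ B ∪ SA A₂) := by
          refine Finset.mem_filter.2 ⟨heE, ?_⟩
          intro x hx
          by_cases hxv : x = v
          · subst hxv; exact Finset.mem_union_right _ hv₂
          · exact Finset.mem_union_left _ (heB (Finset.mem_sdiff.2 ⟨hx, by simp [hxv]⟩))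
        have he1 := hcon he2
        have := (Finset.mem_filter.1 he1).2 hve
        rcases Finset.mem_union.1 this with h | h
        · exact hvB h
        · exact hv₁ h
    have := Finset.card_lt_card hstrict
    rw [FE A₁ hP₁, FE A₂ hP₂] at this
    exact lt_irrefl _ this
  -- decomposition of a pleasant set
  have hSAsub : ∀ A : Finset (Fin n), SA A ⊆ A \ B := fun A => Finset.filter_subset _ _
  have hdecomp : ∀ A, Pleasant E r k ℓ ε A B → A = B ∪ (SA A ∪ ((A \ B) \ SA A)) := by
    intro A hP
    ext x
    simp only [Finset.mem_union, Finset.mem_sdiff]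
    constructor
    · intro hx
      by_cases hxB : x ∈ B
      · exact Or.inl hxB
      · by_cases hxS : x ∈ SA A
        · exact Or.inr (Or.inl hxS)
        · exact Or.inr (Or.inr ⟨⟨hx, hxB⟩, hxS⟩)
    · rintro (hx | hx | hx)
      · exact hP.1 hx
      · exact (Finset.mem_sdiff.1 (hSAsub A hx)).1
      · exact hx.1.1
  -- counting by fibers
  have hcount : 𝒜.card = ∑ S ∈ 𝒮, (𝒜.filter (fun A => φ (SA A) = S)).card := by
    apply Finset.card_eq_sum_card_fiberwise
    intro A hA
    rw [h𝒮]
    exact Finset.mem_image_of_mem _ hA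
  -- ambient cardinalities
  have hWB : Disjoint B W := by
    rw [Finset.disjoint_left]
    intro x hxB hxW
    rw [hW] at hxW
    exact (Finset.mem_sdiff.1 (Finset.filter_subset _ _ hxW)).2 hxB
  have hBW : (B ∪ W).card = b + w := Finset.card_union_of_disjoint hWB
  have hBWn : b + w ≤ n := by
    rw [← hBW]
    calc (B ∪ W).card ≤ Finset.univ.card := Finset.card_le_univ _
      _ = n := by simp
  have hucard : u = n - (b + w) := by
    rw [hudef, hR, Finset.card_sdiff_of_subset (Finset.subset_univ _), hBW]
    simp
  have hwun : w + u ≤ n := by omega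
  -- fiber bound
  have hfiber : ∀ S ∈ 𝒮, (𝒜.filter (fun A => φ (SA A) = S)).card ≤ u.choose (a - S.card) := by
    intro S hS
    have hle : (𝒜.filter (fun A => φ (SA A) = S)).card ≤ (R.powersetCard (a - S.card)).card := by
      apply Finset.card_le_card_of_injOn (fun A => (A \ B) \ SA A)
      · intro A hA
        obtain ⟨hA𝒜, hAS⟩ := Finset.mem_filter.1 hA
        have hP := hmem𝒜 _ hA𝒜
        rw [Finset.mem_coe, Finset.mem_powersetCard]
        constructor
        · intro x hx
          obtain ⟨hx1, hx2⟩ := Finset.mem_sdiff.1 hx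
          obtain ⟨hxA, hxB⟩ := Finset.mem_sdiff.1 hx1
          rw [hR]
          simp only [Finset.mem_sdiff, Finset.mem_univ, true_and, Finset.mem_union]
          push_neg
          refine ⟨hxB, ?_⟩
          intro hxW
          apply hx2
          rw [hSA]
          refine Finset.mem_filter.2 ⟨hx1, ?_⟩
          rw [hW] at hxW
          exact (Finset.mem_filter.1 hxW).2
        · rw [Finset.card_sdiff_of_subset (hSAsub A), FAB A hP]
          have : (SA A).card = S.card := by
            rw [← hAS, hφcard _ (FW A)]
          rw [this]
      · intro A₁ h₁ A₂ h₂ heq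
        rw [Finset.mem_coe] at h₁ h₂
        obtain ⟨hA₁, hS₁⟩ := Finset.mem_filter.1 h₁
        obtain ⟨hA₂, hS₂⟩ := Finset.mem_filter.1 h₂
        have hP₁ := hmem𝒜 _ hA₁
        have hP₂ := hmem𝒜 _ hA₂
        have hSeq : SA A₁ = SA A₂ := by
          have h12 : φ (SA A₁) = φ (SA A₂) := hS₁.trans hS₂.symm
          calc SA A₁ = (φ (SA A₁)).map (Function.Embedding.subtype _) := (hφmap _ (FW A₁)).symm
            _ = (φ (SA A₂)).map (Function.Embedding.subtype _) := by rw [h12]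
            _ = SA A₂ := hφmap _ (FW A₂)
        dsimp only at heq
        rw [hdecomp A₁ hP₁, hdecomp A₂ hP₂, heq, hSeq]
    rwa [Finset.card_powersetCard] at hle
  -- key numeric bound for each S
  set M : ℝ := (Real.sqrt c')⁻¹ * (n:ℝ)^a / (a.factorial : ℝ) with hM
  have hMnn : 0 ≤ M := by rw [hM]; positivity
  have hkey : ∀ S ∈ 𝒮, ((u.choose (a - S.card) : ℕ) : ℝ) ≤
      ((w.choose S.card : ℕ) : ℝ)⁻¹ * M := by
    intro S hS
    rw [h𝒮] at hS
    obtain ⟨A, hA𝒜, rfl⟩ := Finset.mem_image.1 hS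
    have hP := hmem𝒜 _ hA𝒜
    have hseq : (φ (SA A)).card = (SA A).card := hφcard _ (FW A)
    set s := (SA A).card with hsdef
    have hsc : c' ≤ (s:ℝ) := by
      have h := hP.2.2.2.2.1
      rw [FH A] at h
      exact h
    have hsa : s ≤ a := by
      rw [hsdef, ← FAB A hP]
      exact Finset.card_le_card (hSAsub A)
    have htc : c' ≤ ((a - s : ℕ) : ℝ) := by
      have h := hP.2.2.2.2.2
      rw [FH A, FAB A hP] at h
      rw [Nat.cast_sub hsa]
      exact h
    have hs1 : 1 ≤ s := by
      by_contra hcon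
      push_neg at hcon
      interval_cases s
      · simp at hsc; linarith
    have ht1 : 1 ≤ a - s := by
      by_contra hcon
      push_neg at hcon
      have : a - s = 0 := by omega
      rw [this] at htc
      simp at htc
      linarith
    have hws : s ≤ w := by
      rw [hsdef, hwdef]
      exact Finset.card_le_card (FW A)
    have hkb := key_bound n w u s (a - s) hs1 ht1 hwun c' hc'pos hsc htc
    rw [show s + (a - s) = a from by omega] at hkb
    have hwpos : (0:ℝ) < ((w.choose s : ℕ) : ℝ) := by
      exact_mod_cast Nat.choose_pos hws
    rw [hseq, hM]
    rw [inv_mul_eq_div, le_div_iff₀ hwpos]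
    calc ((u.choose (a - s) : ℕ) : ℝ) * ((w.choose s : ℕ) : ℝ)
        = ((w.choose s : ℕ) : ℝ) * ((u.choose (a - s) : ℕ) : ℝ) := by ring
      _ ≤ (Real.sqrt c')⁻¹ * (n:ℝ)^a / (a.factorial : ℝ) := hkb
  -- LYM
  have hcardW : Fintype.card {x // x ∈ W} = w := by
    rw [Fintype.card_coe]
  have hLYM := Finset.sum_card_slice_div_choose_le_one (𝕜 := ℝ) hanti
  rw [hcardW] at hLYM
  have hLYMsum : ∑ S ∈ 𝒮, ((w.choose S.card : ℕ) : ℝ)⁻¹ ≤ 1 := by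
    have hmaps : ∀ S ∈ 𝒮, S.card ∈ Finset.range (w+1) := by
      intro S hS
      rw [Finset.mem_range, Nat.lt_succ_iff]
      calc S.card ≤ Finset.univ.card := Finset.card_le_univ _
        _ = w := by rw [Finset.card_univ, hcardW]
    rw [← Finset.sum_fiberwise_of_maps_to hmaps (fun S => ((w.choose S.card : ℕ) : ℝ)⁻¹)]
    refine le_trans (le_of_eq (Finset.sum_congr rfl ?_)) hLYM
    intro q hq
    have hslice : Finset.slice 𝒮 q = 𝒮.filter (fun S => S.card = q) := by
      ext S
      rw [Finset.mem_slice, Finset.mem_filter]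
    rw [hslice, div_eq_mul_inv]
    rw [Finset.sum_congr rfl (fun S hS => by rw [(Finset.mem_filter.1 hS).2]),
      Finset.sum_const, nsmul_eq_mul]
  -- assemble
  have hsum : ((𝒜.card : ℕ) : ℝ) ≤ M := by
    rw [hcount]
    push_cast
    calc ∑ S ∈ 𝒮, (((𝒜.filter (fun A => φ (SA A) = S)).card : ℕ) : ℝ)
        ≤ ∑ S ∈ 𝒮, ((u.choose (a - S.card) : ℕ) : ℝ) := by
          apply Finset.sum_le_sum
          intro S hS
          exact_mod_cast hfiber S hS
      _ ≤ ∑ S ∈ 𝒮, ((w.choose S.card : ℕ) : ℝ)⁻¹ * M := Finset.sum_le_sum hkey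
      _ = (∑ S ∈ 𝒮, ((w.choose S.card : ℕ) : ℝ)⁻¹) * M := (Finset.sum_mul _ _ _).symm
      _ ≤ 1 * M := mul_le_mul_of_nonneg_right hLYMsum hMnn
      _ = M := one_mul M
  refine hsum.trans (le_of_eq ?_)
  rw [hM, hcoef]
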